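/- Let G be a group with subgroups A, B ≤ G such that B normalizes A, A ∩ B = {e}, and G = AB (inner semidirect product G = [AB], so in particular A ⊴ G). Let G act on a set X, and let ρ : X → X be an orbit-representative map of the restricted action A ↷ X. Then for all x, x' ∈ X: G·x = G·x' if and only if there exists b ∈ B such that ρ(x') = ρ(b·ρ(x)). -/

import Mathlib

/-- Let `G = [AB]` be an inner semidirect product of subgroups
`A, B ≤ G` (so `A ⊴ G`), let `G` act on `X`, and let `ρ : X → X` be an
orbit-representative map of the restricted action `A ↷ X` (i.e. `ρ = ρ̄ ∘ q` for a
section `ρ̄` of the `A`-orbit quotient map `q`).  Then for all `x, x' ∈ X`: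
`G·x = G·x'` iff there exists `b ∈ B` with `ρ(x') = ρ(b·ρ(x))`. -/
theorem stmt_14 {G X : Type*} [Group G] [MulAction G X] (A B : Subgroup G)
    (hnorm : B ≤ Subgroup.normalizer (A : Set G))
    (hint : A ⊓ B = ⊥)
    (hprod : ∀ g : G, ∃ a ∈ A, ∃ b ∈ B, g = a * b)
    (ρ : X → X)
    (ρbar : Quotient (MulAction.orbitRel A X) → X)
    (hsec : ∀ o, Quotient.mk (MulAction.orbitRel A X) (ρbar o) = o)
    (hρ : ρ = ρbar ∘ Quotient.mk (MulAction.orbitRel A X)) :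
    ∀ x x' : X,
      MulAction.orbit G x = MulAction.orbit G x' ↔
        ∃ b ∈ B, ρ x' = ρ (b • ρ x) := by
  -- ρ y lies in the A-orbit of y
  have hmem : ∀ y : X, ρ y ∈ MulAction.orbit A y := by
    intro y
    have := hsec (Quotient.mk (MulAction.orbitRel A X) y)
    have h2 : MulAction.orbitRel A X (ρbar (Quotient.mk (MulAction.orbitRel A X) y)) y :=
      Quotient.exact this
    rw [hρ]; exact h2
  -- ρ is constant on A-orbits
  have hconst : ∀ y z : X, y ∈ MulAction.orbit A z → ρ y = ρ z := by
    intro y z h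
    have : Quotient.mk (MulAction.orbitRel A X) y = Quotient.mk (MulAction.orbitRel A X) z :=
      Quotient.sound h
    simp [hρ, this]
  -- members of A-orbits are in the same G-orbit
  have hAG : ∀ y z : X, y ∈ MulAction.orbit A z → MulAction.orbit G y = MulAction.orbit G z := by
    intro y z ⟨a, ha⟩
    exact MulAction.orbit_eq_iff.mpr ⟨(a : G), ha.symm ▸ rfl⟩
  intro x x'
  constructor
  · intro h
    -- x' ∈ G·x = G·(ρ x)
    have hx : MulAction.orbit G x = MulAction.orbit G (ρ x) := (hAG _ _ (hmem x)).symm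
    have hx' : x' ∈ MulAction.orbit G (ρ x) := by
      rw [← hx, h]; exact MulAction.mem_orbit_self x'
    obtain ⟨g, hg⟩ := hx'
    obtain ⟨a, ha, b, hb, rfl⟩ := hprod g
    refine ⟨b, hb, ?_⟩
    have : x' ∈ MulAction.orbit A ((b : G) • ρ x) := by
      refine ⟨⟨a, ha⟩, ?_⟩
      simpa [mul_smul] using hg
    exact hconst _ _ this
  · rintro ⟨b, hb, heq⟩
    have h1 : MulAction.orbit G x' = MulAction.orbit G (ρ x') := (hAG _ _ (hmem x')).symm
    have h2 : MulAction.orbit G x = MulAction.orbit G (ρ x) := (hAG _ _ (hmem x)).symm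
    have h3 : MulAction.orbit G (ρ (b • ρ x)) = MulAction.orbit G (b • ρ x) :=
      hAG _ _ (hmem _)
    have h4 : MulAction.orbit G (b • ρ x) = MulAction.orbit G (ρ x) :=
      MulAction.orbit_eq_iff.mpr ⟨b, rfl⟩
    rw [h2, h1, heq, h3, h4]
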